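/- Let B be a positive integer, α ∈ (0,1), let k be an integer with 1 ≤ k ≤ B and λ a non-negative integer; set τ = 1 − k/B and β = α(1 − τ + λ/B) = α(k + λ)/B, and assume β < 1. Let φ^{[1]}, …, φ^{[B]} be {0,1}-valued random variables with E(φ^{[b]}) ≤ β for each b, let V = φ^{[1]} + … + φ^{[B]}, and suppose Σ_{u=0}^{k−1} P(V ∈ [k−u, k)) ≥ Σ_{u=0}^{λ} P(V ∈ [k, k+u)). Then P(V ≥ k) ≤ α, i.e., with Π = 1 − V/B, P(Π > τ) ≥ 1 − α. -/

import Mathlib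

open MeasureTheory
open scoped ENNReal

lemma cardA (k lam n : ℕ) (hkn : k ≤ n) :
    k + lam ≤ n + ((Finset.range (lam+1)).filter (fun u => n < k + u)).card := by
  have h : (Finset.range (lam+1)).filter (fun u => n < k + u)
      = Finset.Ico (n - k + 1) (lam + 1) := by
    ext u
    simp only [Finset.mem_filter, Finset.mem_range, Finset.mem_Ico]
    omega
  rw [h, Nat.card_Ico]
  omega

lemma cardB (k n : ℕ) (hnk : n < k) :
    ((Finset.range k).filter (fun u => k ≤ n + u)).card ≤ n := by
  have h : (Finset.range k).filter (fun u => k ≤ n + u) = Finset.Ico (k - n) k := by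
    ext u
    simp only [Finset.mem_filter, Finset.mem_range, Finset.mem_Ico]
    omega
  rw [h, Nat.card_Ico]
  omega

/-- multi split coverage under the smoothing assumption: with
`τ = 1 - k/B`, `β = α(k+λ)/B < 1`, `φ b` {0,1}-valued with `E(φ b) ≤ β`,
`V = Σ_b φ b` satisfying the shape condition
`Σ_{u=0}^{k-1} P(V ∈ [k-u, k)) ≥ Σ_{u=0}^{λ} P(V ∈ [k, k+u))`, one has
`P(V ≥ k) ≤ α`, i.e. `P(Π > τ) ≥ 1 - α` for `Π = 1 - V/B`. -/
theorem multisplit_coverage_smoothed {Ω : Type*} [MeasurableSpace Ω]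
    (μ : Measure Ω) [IsProbabilityMeasure μ]
    (B : ℕ) (hB : 1 ≤ B) (α : ℝ) (hα : α ∈ Set.Ioo (0 : ℝ) 1)
    (k lam : ℕ) (hk : 1 ≤ k) (hkB : k ≤ B)
    (hβ : α * (k + lam) / B < 1)
    (φ : Fin B → Ω → ℝ) (hmeas : ∀ b, Measurable (φ b))
    (hval : ∀ b ω, φ b ω = 0 ∨ φ b ω = 1)
    (hE : ∀ b, ∫ ω, φ b ω ∂μ ≤ α * (k + lam) / B)
    (hshape :
      ∑ u ∈ Finset.range (lam + 1),
          μ {ω | (k : ℝ) ≤ ∑ b, φ b ω ∧ ∑ b, φ b ω < (k : ℝ) + u}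
        ≤ ∑ u ∈ Finset.range k,
            μ {ω | (k : ℝ) - u ≤ ∑ b, φ b ω ∧ ∑ b, φ b ω < (k : ℝ)}) :
    μ {ω | (k : ℝ) ≤ ∑ b, φ b ω} ≤ ENNReal.ofReal α := by
  set V : Ω → ℝ := fun ω => ∑ b, φ b ω with hVdef
  have hVmeas : Measurable V := Finset.measurable_sum _ fun b _ => hmeas b
  have hVnat : ∀ ω, ∃ n : ℕ, V ω = n := by
    intro ω
    refine ⟨∑ b, if φ b ω = 1 then 1 else 0, ?_⟩
    rw [Nat.cast_sum]
    refine Finset.sum_congr rfl fun b _ => ?_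
    rcases hval b ω with h | h <;> simp [h]
  have hVnonneg : ∀ ω, 0 ≤ V ω := fun ω =>
    Finset.sum_nonneg fun b _ => by rcases hval b ω with h | h <;> simp [h]
  -- sets
  set S : Set Ω := {ω | (k : ℝ) ≤ V ω} with hSdef
  set A : ℕ → Set Ω := fun u => {ω | (k : ℝ) ≤ V ω ∧ V ω < (k : ℝ) + u} with hAdef
  set Bs : ℕ → Set Ω := fun u => {ω | (k : ℝ) - u ≤ V ω ∧ V ω < (k : ℝ)} with hBdef
  have hSmeas : MeasurableSet S := measurableSet_le measurable_const hVmeas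
  have hAmeas : ∀ u, MeasurableSet (A u) := fun u =>
    (measurableSet_le measurable_const hVmeas).inter (measurableSet_lt hVmeas measurable_const)
  have hBmeas : ∀ u, MeasurableSet (Bs u) := fun u =>
    (measurableSet_le (measurable_const.sub measurable_const) hVmeas).inter
      (measurableSet_lt hVmeas measurable_const)
  -- pointwise key inequality in ℝ≥0∞
  have key : ∀ ω,
      ((k + lam : ℕ) : ℝ≥0∞) * S.indicator 1 ω
          + ∑ u ∈ Finset.range k, (Bs u).indicator 1 ω
        ≤ ENNReal.ofReal (V ω)
          + ∑ u ∈ Finset.range (lam + 1), (A u).indicator 1 ω := by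
    intro ω
    obtain ⟨n, hn⟩ := hVnat ω
    have hmemA : ∀ u : ℕ, ω ∈ A u ↔ (k ≤ n ∧ n < k + u) := by
      intro u
      simp only [hAdef, Set.mem_setOf_eq, hn]
      constructor
      · rintro ⟨h1, h2⟩; exact ⟨by exact_mod_cast h1, by exact_mod_cast h2⟩
      · rintro ⟨h1, h2⟩; exact ⟨by exact_mod_cast h1, by exact_mod_cast h2⟩
    have hmemB : ∀ u : ℕ, ω ∈ Bs u ↔ (k ≤ n + u ∧ n < k) := by
      intro u
      simp only [hBdef, Set.mem_setOf_eq, hn, sub_le_iff_le_add]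
      constructor
      · rintro ⟨h1, h2⟩; exact ⟨by exact_mod_cast h1, by exact_mod_cast h2⟩
      · rintro ⟨h1, h2⟩; exact ⟨by exact_mod_cast h1, by exact_mod_cast h2⟩
    have hmemS : ω ∈ S ↔ k ≤ n := by
      simp only [hSdef, Set.mem_setOf_eq, hn, Nat.cast_le]
    rw [hn]
    by_cases hkn : k ≤ n
    · -- V ≥ k case
      have hBzero : ∀ u ∈ Finset.range k, (Bs u).indicator (1 : Ω → ℝ≥0∞) ω = 0 := by
        intro u _
        rw [Set.indicator_apply_eq_zero]
        intro hmem
        exact absurd ((hmemB u).1 hmem).2 (by omega)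
      rw [Finset.sum_eq_zero hBzero, add_zero,
        Set.indicator_of_mem (hmemS.2 hkn), Pi.one_apply, mul_one]
      have hAsum : ∑ u ∈ Finset.range (lam + 1), (A u).indicator (1 : Ω → ℝ≥0∞) ω
          = (((Finset.range (lam+1)).filter (fun u => n < k + u)).card : ℝ≥0∞) := by
        rw [Finset.card_filter, Nat.cast_sum]
        refine Finset.sum_congr rfl fun u _ => ?_
        rw [Set.indicator_apply]
        have hiff : (ω ∈ A u) ↔ n < k + u :=
          ⟨fun hm => ((hmemA u).1 hm).2, fun h => (hmemA u).2 ⟨hkn, h⟩⟩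
        by_cases h : n < k + u <;> simp [hiff, h]
      rw [hAsum, ENNReal.ofReal_natCast]
      exact_mod_cast cardA k lam n hkn
    · -- V < k case
      push_neg at hkn
      have hAzero : ∀ u ∈ Finset.range (lam + 1), (A u).indicator (1 : Ω → ℝ≥0∞) ω = 0 := by
        intro u _
        rw [Set.indicator_apply_eq_zero]
        intro hmem
        exact absurd ((hmemA u).1 hmem).1 (by omega)
      rw [Finset.sum_eq_zero hAzero, add_zero,
        Set.indicator_of_notMem (fun h => absurd (hmemS.1 h) (by omega)), mul_zero, zero_add]
      have hBsum : ∑ u ∈ Finset.range k, (Bs u).indicator (1 : Ω → ℝ≥0∞) ω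
          = (((Finset.range k).filter (fun u => k ≤ n + u)).card : ℝ≥0∞) := by
        rw [Finset.card_filter, Nat.cast_sum]
        refine Finset.sum_congr rfl fun u _ => ?_
        rw [Set.indicator_apply]
        have hiff : (ω ∈ Bs u) ↔ k ≤ n + u :=
          ⟨fun hm => ((hmemB u).1 hm).1, fun h => (hmemB u).2 ⟨h, hkn⟩⟩
        by_cases h : k ≤ n + u <;> simp [hiff, h]
      rw [hBsum, ENNReal.ofReal_natCast]
      exact_mod_cast cardB k n hkn
  -- integrate the key inequality
  have hlin : ((k + lam : ℕ) : ℝ≥0∞) * μ S + ∑ u ∈ Finset.range k, μ (Bs u)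
      ≤ (∫⁻ ω, ENNReal.ofReal (V ω) ∂μ) + ∑ u ∈ Finset.range (lam + 1), μ (A u) := by
    have h1 := lintegral_mono (μ := μ) key
    calc ((k + lam : ℕ) : ℝ≥0∞) * μ S + ∑ u ∈ Finset.range k, μ (Bs u)
        = ∫⁻ ω, (((k + lam : ℕ) : ℝ≥0∞) * S.indicator 1 ω
            + ∑ u ∈ Finset.range k, (Bs u).indicator 1 ω) ∂μ := by
          rw [lintegral_add_left ((measurable_one.indicator hSmeas).const_mul _),
            lintegral_const_mul _ (measurable_one.indicator hSmeas),
            lintegral_indicator_one hSmeas,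
            lintegral_finset_sum _ (fun u _ => measurable_one.indicator (hBmeas u))]
          simp_rw [lintegral_indicator_one (hBmeas _)]
      _ ≤ ∫⁻ ω, (ENNReal.ofReal (V ω)
            + ∑ u ∈ Finset.range (lam + 1), (A u).indicator 1 ω) ∂μ := h1
      _ = (∫⁻ ω, ENNReal.ofReal (V ω) ∂μ) + ∑ u ∈ Finset.range (lam + 1), μ (A u) := by
          rw [lintegral_add_left hVmeas.ennreal_ofReal,
            lintegral_finset_sum _ (fun u _ => measurable_one.indicator (hAmeas u))]
          simp_rw [lintegral_indicator_one (hAmeas _)]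
  -- mean bound
  have hint : ∀ b, Integrable (φ b) μ := by
    intro b
    refine (integrable_const (1:ℝ)).mono' (hmeas b).aestronglyMeasurable (ae_of_all _ ?_)
    intro ω
    rcases hval b ω with h | h <;> simp [h]
  have hVint : Integrable V μ := integrable_finset_sum _ fun b _ => hint b
  have hEV : ∫ ω, V ω ∂μ ≤ α * (k + lam) := by
    have : ∫ ω, V ω ∂μ = ∑ b, ∫ ω, φ b ω ∂μ := integral_finset_sum _ fun b _ => hint b
    rw [this]
    calc ∑ b : Fin B, ∫ ω, φ b ω ∂μ ≤ ∑ b : Fin B, (α * (k + lam) / B) :=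
          Finset.sum_le_sum fun b _ => hE b
      _ = B * (α * (k + lam) / B) := by
          rw [Finset.sum_const, Finset.card_univ, Fintype.card_fin, nsmul_eq_mul]
      _ = α * (k + lam) := by
          field_simp
  have hlint : ∫⁻ ω, ENNReal.ofReal (V ω) ∂μ ≤ ENNReal.ofReal (α * (k + lam)) := by
    rw [← ofReal_integral_eq_lintegral_ofReal hVint (ae_of_all _ hVnonneg)]
    exact ENNReal.ofReal_le_ofReal hEV
  -- combine
  have hBsne : ∑ u ∈ Finset.range k, μ (Bs u) ≠ ⊤ :=
    (ENNReal.sum_lt_top.2 fun u _ => measure_lt_top μ _).ne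
  have hmain : ((k + lam : ℕ) : ℝ≥0∞) * μ S ≤ ENNReal.ofReal (α * (k + lam)) := by
    have h2 : ((k + lam : ℕ) : ℝ≥0∞) * μ S + ∑ u ∈ Finset.range k, μ (Bs u)
        ≤ ENNReal.ofReal (α * (k + lam)) + ∑ u ∈ Finset.range k, μ (Bs u) := by
      calc ((k + lam : ℕ) : ℝ≥0∞) * μ S + ∑ u ∈ Finset.range k, μ (Bs u)
          ≤ (∫⁻ ω, ENNReal.ofReal (V ω) ∂μ) + ∑ u ∈ Finset.range (lam + 1), μ (A u) := hlin
        _ ≤ ENNReal.ofReal (α * (k + lam)) + ∑ u ∈ Finset.range k, μ (Bs u) :=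
            add_le_add hlint hshape
    exact (ENNReal.add_le_add_iff_right hBsne).mp h2
  have hklam : (0:ℕ) < k + lam := by omega
  have hc0 : ((k + lam : ℕ) : ℝ≥0∞) ≠ 0 := by exact_mod_cast hklam.ne'
  have hctop : ((k + lam : ℕ) : ℝ≥0∞) ≠ ⊤ := ENNReal.natCast_ne_top _
  have hmain' : μ S * ((k + lam : ℕ) : ℝ≥0∞) ≤ ENNReal.ofReal (α * (k + lam)) := by
    rw [mul_comm]; exact hmain
  have hdiv := (ENNReal.le_div_iff_mul_le (Or.inl hc0) (Or.inl hctop)).mpr hmain'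
  refine le_trans hdiv ?_
  rw [show ((k + lam : ℕ) : ℝ≥0∞) = ENNReal.ofReal ((k + lam : ℕ) : ℝ) from
    (ENNReal.ofReal_natCast _).symm,
    ← ENNReal.ofReal_div_of_pos (by exact_mod_cast hklam)]
  apply ENNReal.ofReal_le_ofReal
  have hpos : (0:ℝ) < (k:ℝ) + lam := by exact_mod_cast hklam
  rw [mul_div_assoc, show ((k + lam : ℕ):ℝ) = (k:ℝ) + lam by push_cast; ring,
    div_self hpos.ne', mul_one]
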